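/- Let (M, d) be a metric space, C ⊆ M a finite set with |C| ≥ 2, x ∈ C, and w ≥ 0 a real number. For a threshold t ≥ 0 and a set A ⊆ M, let G_t(A) be the simple graph on vertex set A in which distinct a, b ∈ A are adjacent if and only if d(a, b) ≤ t. If G_w(C) is connected and C∖{x} is nonempty, then G_{2w}(C∖{x}) is connected. -/

import Mathlib

/-- The threshold graph `G_t(A)` on a finite set `A` in a metric space: distinct points
`a, b ∈ A` are adjacent iff `dist a b ≤ t`. -/
def threshGraph {M : Type*} [MetricSpace M] (A : Finset M) (t : ℝ) :
    SimpleGraph {a // a ∈ A} where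
  Adj a b := a ≠ b ∧ dist (a : M) (b : M) ≤ t
  symm := by
    constructor
    intro a b h
    exact ⟨h.1.symm, by rw [dist_comm]; exact h.2⟩
  loopless := by
    constructor
    intro a h
    exact h.1 rfl

lemma threshGraph_skip
    {M : Type*} [MetricSpace M] [DecidableEq M]
    (C : Finset M) (x : M) (w : ℝ) (hw : 0 ≤ w) :
    ∀ (n : ℕ) (a b : {a // a ∈ C}) (p : (threshGraph C w).Walk a b),
      p.length = n → (ha : (a : M) ≠ x) → (hb : (b : M) ≠ x) →
      (threshGraph (C.erase x) (2 * w)).Reachable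
        ⟨a, Finset.mem_erase.2 ⟨ha, a.2⟩⟩ ⟨b, Finset.mem_erase.2 ⟨hb, b.2⟩⟩ := by
  intro n
  induction n using Nat.strong_induction_on with
  | _ n ih =>
    intro a b p hlen ha hb
    cases p with
    | nil =>
      exact SimpleGraph.Reachable.refl _
    | @cons _ c _ hac p' =>
      by_cases hcx : (c : M) = x
      · -- c = x; look at first step of p'
        cases p' with
        | nil =>
          exact absurd hcx hb
        | @cons _ d _ hcd p'' =>
          by_cases hdx : (d : M) = x
          · exact absurd (Subtype.ext (hcx.trans hdx.symm)) hcd.1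
          · have hrec := ih p''.length (by simp [SimpleGraph.Walk.length_cons] at hlen; omega) d b p'' rfl hdx hb
            have hdist : dist (a : M) (d : M) ≤ 2 * w := by
              calc dist (a : M) (d : M) ≤ dist (a : M) (c : M) + dist (c : M) (d : M) :=
                    dist_triangle _ _ _
                _ ≤ w + w := add_le_add hac.2 hcd.2
                _ = 2 * w := by ring
            by_cases had : a = d
            · cases had
              exact hrec
            · refine SimpleGraph.Reachable.trans (SimpleGraph.Adj.reachable ⟨?_, hdist⟩) hrec
              simp only [ne_eq, Subtype.mk.injEq]
              exact fun h => had (Subtype.ext h)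
      · have hrec := ih p'.length
          (by simp [SimpleGraph.Walk.length_cons] at hlen; omega) c b p' rfl hcx hb
        refine SimpleGraph.Reachable.trans
          (SimpleGraph.Adj.reachable ⟨?_, le_trans hac.2 (by linarith)⟩) hrec
        simp only [ne_eq, Subtype.mk.injEq]
        exact fun h => hac.1 (Subtype.ext h)

/-- Let `C` be a finite set with `|C| ≥ 2` in a metric space, `x ∈ C`, and `w ≥ 0`.
If the threshold graph `G_w(C)` is connected and `C \ {x}` is nonempty, then the
threshold graph `G_{2w}(C \ {x})` is connected. -/
theorem threshGraph_erase_connected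
    {M : Type*} [MetricSpace M] [DecidableEq M]
    (C : Finset M) (hC : 2 ≤ C.card) (x : M) (hx : x ∈ C) (w : ℝ) (hw : 0 ≤ w)
    (hconn : (threshGraph C w).Connected) (hne : (C.erase x).Nonempty) :
    (threshGraph (C.erase x) (2 * w)).Connected := by
  obtain ⟨v, hv⟩ := hne
  haveI : Nonempty {a // a ∈ C.erase x} := ⟨⟨v, hv⟩⟩
  refine ⟨fun a b => ?_⟩
  have haC : (a : M) ∈ C := Finset.mem_of_mem_erase a.2
  have hbC : (b : M) ∈ C := Finset.mem_of_mem_erase b.2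
  have hax : (a : M) ≠ x := (Finset.mem_erase.1 a.2).1
  have hbx : (b : M) ≠ x := (Finset.mem_erase.1 b.2).1
  obtain ⟨p⟩ := hconn.preconnected ⟨a, haC⟩ ⟨b, hbC⟩
  have := threshGraph_skip C x w hw p.length ⟨a, haC⟩ ⟨b, hbC⟩ p rfl hax hbx
  convert this <;> exact Subtype.ext rfl
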